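/- (Theorem 1, subadditivity.) With the weights μ and the functional ψ as in the context, for all compact selfadjoint operators S and T such that S, T and S+T each admit an eigenvalue arrangement, one has ψ(S+T) ≤ ψ(S) + ψ(T). -/

import Mathlib

/-- `S` is a compact selfadjoint operator with eigenvalue arrangement
`(lam n)_{n ∈ ℤ \ {0}}`: there is a Hilbert basis `(e_n)` of eigenvectors,
`S e_n = lam n • e_n`, the `lam n` are nonincreasing and nonnegative for `n ≥ 1`,
and nonincreasing and nonpositive for `n ≤ -1`. -/
def EigArrangement {H : Type*} [NormedAddCommGroup H] [InnerProductSpace ℂ H]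
    [CompleteSpace H] (S : H →L[ℂ] H) (lam : {n : ℤ // n ≠ 0} → ℝ) : Prop :=
  IsCompactOperator (⇑S) ∧ IsSelfAdjoint S ∧
    (∃ e : HilbertBasis {n : ℤ // n ≠ 0} ℂ H,
      ∀ m : {n : ℤ // n ≠ 0}, S (e m) = (lam m : ℂ) • e m) ∧
    (∀ n : ℤ, (hn : 1 ≤ n) →
      lam ⟨n + 1, by omega⟩ ≤ lam ⟨n, by omega⟩ ∧ 0 ≤ lam ⟨n, by omega⟩) ∧
    (∀ n : ℤ, (hn : n ≤ -1) →
      lam ⟨n, by omega⟩ ≤ lam ⟨n - 1, by omega⟩ ∧ lam ⟨n, by omega⟩ ≤ 0)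

/-- The weights `μ : ℤ \ {0} → ℝ`: nonincreasing on each side, positive-side weights
dominate negative-side ones, and `∑ |μ_n| < ∞`. -/
def GoodWeights (μ : {n : ℤ // n ≠ 0} → ℝ) : Prop :=
  (∀ n : ℤ, (hn : 1 ≤ n) → μ ⟨n + 1, by omega⟩ ≤ μ ⟨n, by omega⟩) ∧
  (∀ n : ℤ, (hn : n ≤ -1) → μ ⟨n, by omega⟩ ≤ μ ⟨n - 1, by omega⟩) ∧
  (∀ p m : ℤ, (hp : 1 ≤ p) → (hm : m ≤ -1) → μ ⟨m, by omega⟩ ≤ μ ⟨p, by omega⟩) ∧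
  Summable fun n => |μ n|

section Aux
open Finset Filter
lemma tele_hasSum (a : ℕ → ℝ) (hanti : Antitone a) (h0 : ∀ k, 0 ≤ a k)
    (hlim : Tendsto a atTop (nhds 0)) (j : ℕ) :
    HasSum (fun k => if j ≤ k then a k - a (k+1) else 0) (a j) := by
  set f : ℕ → ℝ := fun k => if j ≤ k then a k - a (k+1) else 0 with hf
  have hfn : ∀ k, 0 ≤ f k := by
    intro k; simp only [hf]; split
    · linarith [hanti (Nat.le_succ k)]
    · exact le_rfl
  have hps : ∀ N, ∑ k ∈ range N, f k = a (min j N) - a N := by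
    intro N
    induction N with
    | zero => simp
    | succ N ih =>
      rw [Finset.sum_range_succ, ih]
      simp only [hf]
      split
      · rename_i h
        rw [min_eq_left h, min_eq_left (by omega)]
        ring
      · rename_i h
        rw [min_eq_right (by omega : (N:ℕ) ≤ j), min_eq_right (by omega : (N+1:ℕ) ≤ j)]; ring
  rw [hasSum_iff_tendsto_nat_of_nonneg hfn]
  have : Tendsto (fun N => a (min j N) - a N) atTop (nhds (a j - 0)) := by
    apply Tendsto.sub _ hlim
    apply Tendsto.congr' _ tendsto_const_nhds
    filter_upwards [eventually_ge_atTop j] with N hN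
    rw [min_eq_left hN]
  simpa using this.congr fun N => (hps N).symm

lemma abel_nonneg (a z : ℕ → ℝ) (M : ℝ)
    (hanti : Antitone a) (h0 : ∀ k, 0 ≤ a k) (hsum : Summable a)
    (hz : ∀ k, |z k| ≤ M)
    (hZ : ∀ K, 0 ≤ ∑ k ∈ Finset.range K, z k) :
    0 ≤ ∑' k, a k * z k := by
  have hlim : Tendsto a atTop (nhds 0) := hsum.tendsto_atTop_zero
  have htele := tele_hasSum a hanti h0 hlim
  have hM : 0 ≤ M := le_trans (abs_nonneg _) (hz 0)
  set F : ℕ × ℕ → ℝ := fun p => (if p.1 ≤ p.2 then a p.2 - a (p.2+1) else 0) * z p.1 with hF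
  -- summability of F
  have hGsum : Summable (fun p : ℕ × ℕ => (if p.1 ≤ p.2 then a p.2 - a (p.2+1) else 0) * M) := by
    rw [summable_prod_of_nonneg]
    · constructor
      · intro j
        exact ((htele j).summable).mul_right M
      · apply Summable.congr (hsum.mul_right M)
        intro j
        exact (((htele j).mul_right M).tsum_eq).symm
    · intro p
      simp only [Pi.zero_apply]
      apply mul_nonneg _ hM
      split
      · linarith [hanti (Nat.le_succ p.2)]
      · exact le_rfl
  have hFsum : Summable F := by
    apply Summable.of_norm_bounded hGsum
    intro p
    simp only [hF, norm_mul, Real.norm_eq_abs]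
    have h1 : 0 ≤ (if p.1 ≤ p.2 then a p.2 - a (p.2+1) else 0) := by
      split
      · linarith [hanti (Nat.le_succ p.2)]
      · exact le_rfl
    rw [abs_of_nonneg h1]
    exact mul_le_mul_of_nonneg_left (hz p.1) h1
  -- first evaluation : sum over j then k
  have hrow : ∀ j, HasSum (fun k => F (j, k)) (a j * z j) := by
    intro j
    have := (htele j).mul_right (z j)
    exact this
  have hfirst : ∑' p, F p = ∑' j, a j * z j := by
    rw [hFsum.tsum_prod' (fun j => (hrow j).summable)]
    exact tsum_congr fun j => (hrow j).tsum_eq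
  -- second evaluation : sum over k then j
  have hcol : ∀ k, (∑' j, F (j, k)) = (a k - a (k+1)) * ∑ j ∈ Finset.range (k+1), z j := by
    intro k
    have hsupp : ∀ j ∉ Finset.range (k+1), F (j, k) = 0 := by
      intro j hj
      simp only [Finset.mem_range] at hj
      simp only [hF]
      rw [if_neg (by omega)]
      ring
    rw [tsum_eq_sum hsupp, Finset.mul_sum]
    apply Finset.sum_congr rfl
    intro j hj
    simp only [Finset.mem_range] at hj
    simp only [hF, if_pos (by omega : j ≤ k)]
  have hsecond : ∑' p, F p = ∑' k, (a k - a (k+1)) * ∑ j ∈ Finset.range (k+1), z j := by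
    have hswap : ∑' p : ℕ × ℕ, F p.swap = ∑' p, F p :=
      (Equiv.prodComm ℕ ℕ).tsum_eq F
    rw [← hswap, hFsum.prod_symm.tsum_prod'
      (fun k => summable_of_ne_finset_zero (s := Finset.range (k+1)) (by
        intro j hj
        simp only [Finset.mem_range] at hj
        simp only [hF, Prod.swap_prod_mk]
        rw [if_neg (by omega)]
        ring))]
    exact tsum_congr fun k => hcol k
  rw [← hfirst, hsecond]
  apply tsum_nonneg
  intro k
  apply mul_nonneg _ (hZ (k+1))
  linarith [hanti (Nat.le_succ k)]

abbrev II := {n : ℤ // n ≠ 0}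
def pemb (k : ℕ) : II := ⟨(k:ℤ)+1, by omega⟩

lemma pemb_inj : Function.Injective pemb := by
  intro a b h
  simpa [pemb, Subtype.ext_iff] using h

lemma posSide (μ lam r : II → ℝ) (D : II → II → ℝ)
    (hD0 : ∀ n m, 0 ≤ D n m)
    (hrowD : ∀ n, HasSum (fun m => D n m) 1)
    (hcolD : ∀ m, HasSum (fun n => D n m) 1)
    (hr : ∀ n, HasSum (fun m => lam m * D n m) (r n))
    (C : ℝ) (hC : ∀ m, |lam m| ≤ C)
    (hy_mono : ∀ k : ℕ, lam (pemb (k+1)) ≤ lam (pemb k))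
    (hy_nonneg : ∀ k : ℕ, 0 ≤ lam (pemb k))
    (hlam_negside : ∀ m : II, m.1 ≤ -1 → lam m ≤ 0)
    (ha_mono : ∀ k : ℕ, μ (pemb (k+1)) ≤ μ (pemb k))
    (ha_sum : Summable fun k => |μ (pemb k)|) :
    ∑' k, μ (pemb k) * r (pemb k) ≤ ∑' k, μ (pemb k) * lam (pemb k) := by
  classical
  set a : ℕ → ℝ := fun k => μ (pemb k) with ha
  set x : ℕ → ℝ := fun k => r (pemb k) with hx
  set y : ℕ → ℝ := fun k => lam (pemb k) with hy
  have hanti : Antitone a := antitone_nat_of_succ_le ha_mono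
  have hasum : Summable a := summable_abs_iff.mp ha_sum
  have ha0 : ∀ k, 0 ≤ a k := fun k =>
    hanti.le_of_tendsto hasum.tendsto_atTop_zero k
  have hyanti : Antitone y := antitone_nat_of_succ_le hy_mono
  have hC0 : 0 ≤ C := le_trans (abs_nonneg _) (hC (pemb 0))
  -- bound on r
  have hrbound : ∀ n, |r n| ≤ C := by
    intro n
    have hsabs : Summable (fun m => |lam m * D n m|) := by
      apply Summable.of_nonneg_of_le (fun m => abs_nonneg _) _ ((hrowD n).summable.mul_left C)
      intro m
      rw [abs_mul, abs_of_nonneg (hD0 n m)]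
      exact mul_le_mul_of_nonneg_right (hC m) (hD0 n m)
    have e1 : |r n| ≤ ∑' m, |lam m * D n m| := by
      rw [← (hr n).tsum_eq]
      have := norm_tsum_le_tsum_norm (f := fun m => lam m * D n m)
        (by simpa [Real.norm_eq_abs, abs_mul] using hsabs)
      simpa [Real.norm_eq_abs, abs_mul] using this
      
    have e2 : ∑' m, |lam m * D n m| ≤ ∑' m, C * D n m := by
      apply Summable.tsum_le_tsum _ hsabs ((hrowD n).summable.mul_left C)
      intro m
      rw [abs_mul, abs_of_nonneg (hD0 n m)]
      exact mul_le_mul_of_nonneg_right (hC m) (hD0 n m)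
    have e3 : ∑' m, C * D n m = C := by rw [((hrowD n).mul_left C).tsum_eq, mul_one]
    linarith
  -- Ky Fan inequality for partial sums
  have hKF : ∀ K : ℕ, ∑ k ∈ Finset.range K, x k ≤ ∑ k ∈ Finset.range K, y k := by
    intro K
    rcases Nat.eq_zero_or_pos K with h0 | hK
    · simp [h0]
    set F : Finset II := (Finset.range K).image pemb with hF
    set c : II → ℝ := fun m => ∑ k ∈ Finset.range K, D (pemb k) m with hc
    have hc0 : ∀ m, 0 ≤ c m := fun m => Finset.sum_nonneg fun k _ => hD0 _ m
    have hcsum : HasSum c (K : ℝ) := by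
      have := hasSum_sum (s := Finset.range K) (f := fun k m => D (pemb k) m)
        (a := fun k => (1:ℝ)) (fun k _ => hrowD (pemb k))
      simpa using this
    have hc1 : ∀ m, c m ≤ 1 := by
      intro m
      have : c m = ∑ n ∈ F, D n m := by
        rw [hF, Finset.sum_image (fun k _ l _ h => pemb_inj h)]
      rw [this, ← (hcolD m).tsum_eq]
      exact Summable.sum_le_tsum F (fun n _ => hD0 n m) (hcolD m).summable
    have hclam : Summable (fun m => lam m * c m) := by
      apply Summable.of_norm_bounded (hcsum.summable.mul_left C)
      intro m
      rw [Real.norm_eq_abs, abs_mul, abs_of_nonneg (hc0 m)]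
      exact mul_le_mul_of_nonneg_right (hC m) (hc0 m)
    have hsum_eq : ∑ k ∈ Finset.range K, x k = ∑' m, lam m * c m := by
      have : ∀ m : II, lam m * c m = ∑ k ∈ Finset.range K, lam m * D (pemb k) m := by
        intro m; rw [hc]; exact Finset.mul_sum _ _ _
      rw [tsum_congr this, Summable.tsum_finsetSum (fun k _ => ((hr (pemb k)).summable.mul_left (1:ℝ)).congr (by simp))]
      apply Finset.sum_congr rfl
      intro k _
      exact ((hr (pemb k)).tsum_eq).symm
    set t : ℝ := y (K - 1) with ht
    have ht0 : 0 ≤ t := hy_nonneg _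
    have hmemF : ∀ m ∈ F, ∃ k, k < K ∧ pemb k = m := by
      intro m hm
      rw [hF, Finset.mem_image] at hm
      obtain ⟨k, hk, hkm⟩ := hm
      exact ⟨k, Finset.mem_range.mp hk, hkm⟩
    have hlam_ge : ∀ m ∈ F, t ≤ lam m := by
      intro m hm
      obtain ⟨k, hk, rfl⟩ := hmemF m hm
      exact hyanti (by omega : K - 1 ≥ k) |>.trans_eq rfl
    have hlam_le : ∀ m : II, m ∉ F → lam m ≤ t := by
      intro m hm
      by_cases hp : 1 ≤ m.1
      · have hmk : m = pemb ((m.1 - 1).toNat) := by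
          simp only [pemb, Subtype.ext_iff]; omega
        have hK' : K ≤ (m.1 - 1).toNat := by
          by_contra hcon
          exact hm (by
            rw [hF, Finset.mem_image]
            exact ⟨(m.1 - 1).toNat, Finset.mem_range.mpr (by omega), hmk.symm⟩)
        rw [hmk]
        exact hyanti (by omega : K - 1 ≤ (m.1 - 1).toNat)
      · exact le_trans (hlam_negside m (by have := m.2; omega)) ht0
    -- main chain
    have step1 : ∑' m, lam m * c m ≤ ∑' m, (t * c m + (if m ∈ F then (lam m - t) * c m else 0)) := by
      refine Summable.tsum_le_tsum (fun m => ?_) hclam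
        ((hcsum.summable.mul_left t).add
          (summable_of_ne_finset_zero (s := F) (fun m hm => by rw [if_neg hm])))
      by_cases hm : m ∈ F
      · rw [if_pos hm]; ring_nf; exact le_rfl
      · rw [if_neg hm]
        simpa using mul_le_mul_of_nonneg_right (hlam_le m hm) (hc0 m)
    have step2 : ∑' m, (t * c m + (if m ∈ F then (lam m - t) * c m else 0))
        = t * K + ∑ m ∈ F, (lam m - t) * c m := by
      rw [Summable.tsum_add (hcsum.summable.mul_left t)
        (summable_of_ne_finset_zero (s := F) (fun m hm => by rw [if_neg hm]))]
      congr 1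
      · exact (hcsum.mul_left t).tsum_eq
      · rw [tsum_eq_sum (s := F) (fun m hm => by rw [if_neg hm])]
        exact Finset.sum_congr rfl fun m hm => by rw [if_pos hm]
    have step3 : ∑ m ∈ F, (lam m - t) * c m ≤ ∑ m ∈ F, (lam m - t) := by
      apply Finset.sum_le_sum
      intro m hm
      have h1 : 0 ≤ lam m - t := by linarith [hlam_ge m hm]
      calc (lam m - t) * c m ≤ (lam m - t) * 1 := mul_le_mul_of_nonneg_left (hc1 m) h1
      _ = lam m - t := mul_one _
    have hcard : (F.card : ℝ) = (K : ℝ) := by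
      rw [hF, Finset.card_image_of_injective _ pemb_inj, Finset.card_range]
    have step4 : t * K + ∑ m ∈ F, (lam m - t) = ∑ k ∈ Finset.range K, y k := by
      rw [Finset.sum_sub_distrib, Finset.sum_const, nsmul_eq_mul, hcard]
      rw [hF, Finset.sum_image (fun k _ l _ h => pemb_inj h)]
      ring_nf
      rfl
    calc ∑ k ∈ Finset.range K, x k = ∑' m, lam m * c m := hsum_eq
    _ ≤ t * K + ∑ m ∈ F, (lam m - t) * c m := le_trans step1 (le_of_eq step2)
    _ ≤ t * K + ∑ m ∈ F, (lam m - t) := by linarith [step3]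
    _ = ∑ k ∈ Finset.range K, y k := step4
  -- now apply abel
  have hax : Summable (fun k => a k * x k) := by
    apply Summable.of_norm_bounded (ha_sum.mul_right C)
    intro k
    rw [Real.norm_eq_abs, abs_mul]
    exact mul_le_mul_of_nonneg_left (hrbound (pemb k)) (abs_nonneg _)
  have hay : Summable (fun k => a k * y k) := by
    apply Summable.of_norm_bounded (ha_sum.mul_right C)
    intro k
    rw [Real.norm_eq_abs, abs_mul]
    exact mul_le_mul_of_nonneg_left (hC (pemb k)) (abs_nonneg _)
  have habel := abel_nonneg a (fun k => y k - x k) (2*C) hanti ha0 hasum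
    (fun k => by
      have h1 := hrbound (pemb k)
      have h2 := hC (pemb k)
      calc |y k - x k| ≤ |y k| + |x k| := abs_sub _ _
      _ ≤ C + C := add_le_add h2 h1
      _ = 2*C := by ring)
    (fun K => by
      rw [Finset.sum_sub_distrib]
      linarith [hKF K])
  have : ∑' k, a k * (y k - x k) = (∑' k, a k * y k) - ∑' k, a k * x k := by
    rw [← Summable.tsum_sub hay hax]
    exact tsum_congr fun k => by ring
  rw [this] at habel
  linarith

def nemb (k : ℕ) : II := ⟨-((k:ℤ)+1), by omega⟩

lemma nemb_inj : Function.Injective nemb := by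
  intro a b h
  simp only [nemb, Subtype.ext_iff] at h
  omega

def negI : II ≃ II where
  toFun n := ⟨-n.1, by have := n.2; omega⟩
  invFun n := ⟨-n.1, by have := n.2; omega⟩
  left_inv n := by simp
  right_inv n := by simp

lemma range_pemb_compl : (Set.range pemb)ᶜ = Set.range nemb := by
  ext n
  simp only [Set.mem_compl_iff, Set.mem_range, pemb, nemb, Subtype.ext_iff]
  constructor
  · intro h
    refine ⟨(-n.1 - 1).toNat, ?_⟩
    have hn := n.2
    by_cases hp : 0 < n.1
    · exact absurd ⟨(n.1 - 1).toNat, by omega⟩ h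
    · omega
  · rintro ⟨k, hk⟩ ⟨l, hl⟩
    omega

lemma tsum_split (g : II → ℝ) (hg : Summable g) :
    ∑' n, g n = (∑' k, g (pemb k)) + ∑' k, g (nemb k) := by
  have h1 : Summable ((fun x : ↥(Set.range pemb) => g ↑x)) := hg.subtype _
  have h2 : Summable ((fun x : ↥((Set.range pemb)ᶜ) => g ↑x)) := hg.subtype _
  rw [← Summable.tsum_add_tsum_compl (s := Set.range pemb) h1 h2]
  congr 1
  · rw [← (Equiv.ofInjective pemb pemb_inj).tsum_eq (fun x : ↥(Set.range pemb) => g ↑x)]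
    exact tsum_congr fun c => by simp
  · rw [tsum_congr_set_coe (fun n => g n) range_pemb_compl,
      ← (Equiv.ofInjective nemb nemb_inj).tsum_eq (fun x : ↥(Set.range nemb) => g ↑x)]
    exact tsum_congr fun c => by simp

lemma key (μ lam r : II → ℝ) (D : II → II → ℝ)
    (hD0 : ∀ n m, 0 ≤ D n m)
    (hrowD : ∀ n, HasSum (fun m => D n m) 1)
    (hcolD : ∀ m, HasSum (fun n => D n m) 1)
    (hr : ∀ n, HasSum (fun m => lam m * D n m) (r n))
    (C : ℝ) (hC : ∀ m, |lam m| ≤ C)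
    (hlam_pos : ∀ n : ℤ, (hn : 1 ≤ n) →
      lam ⟨n + 1, by omega⟩ ≤ lam ⟨n, by omega⟩ ∧ 0 ≤ lam ⟨n, by omega⟩)
    (hlam_neg : ∀ n : ℤ, (hn : n ≤ -1) →
      lam ⟨n, by omega⟩ ≤ lam ⟨n - 1, by omega⟩ ∧ lam ⟨n, by omega⟩ ≤ 0)
    (hμ1 : ∀ n : ℤ, (hn : 1 ≤ n) → μ ⟨n + 1, by omega⟩ ≤ μ ⟨n, by omega⟩)
    (hμ2 : ∀ n : ℤ, (hn : n ≤ -1) → μ ⟨n, by omega⟩ ≤ μ ⟨n - 1, by omega⟩)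
    (hμ4 : Summable fun n => |μ n|) :
    ∑' n, μ n * r n ≤ ∑' n, μ n * lam n := by
  have hC0 : 0 ≤ C := le_trans (abs_nonneg _) (hC (pemb 0))
  have hrbound : ∀ n, |r n| ≤ C := by
    intro n
    have hsabs : Summable (fun m => |lam m * D n m|) := by
      apply Summable.of_nonneg_of_le (fun m => abs_nonneg _) _ ((hrowD n).summable.mul_left C)
      intro m
      rw [abs_mul, abs_of_nonneg (hD0 n m)]
      exact mul_le_mul_of_nonneg_right (hC m) (hD0 n m)
    have e1 : |r n| ≤ ∑' m, |lam m * D n m| := by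
      rw [← (hr n).tsum_eq]
      have := norm_tsum_le_tsum_norm (f := fun m => lam m * D n m)
        (by simpa [Real.norm_eq_abs, abs_mul] using hsabs)
      simpa [Real.norm_eq_abs, abs_mul] using this
    have e2 : ∑' m, |lam m * D n m| ≤ ∑' m, C * D n m := by
      apply Summable.tsum_le_tsum _ hsabs ((hrowD n).summable.mul_left C)
      intro m
      rw [abs_mul, abs_of_nonneg (hD0 n m)]
      exact mul_le_mul_of_nonneg_right (hC m) (hD0 n m)
    have e3 : ∑' m, C * D n m = C := by rw [((hrowD n).mul_left C).tsum_eq, mul_one]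
    linarith
  have hμr : Summable (fun n : II => μ n * r n) := by
    apply Summable.of_norm_bounded (hμ4.mul_right C)
    intro n
    rw [Real.norm_eq_abs, abs_mul]
    exact mul_le_mul_of_nonneg_left (hrbound n) (abs_nonneg _)
  have hμlam : Summable (fun n : II => μ n * lam n) := by
    apply Summable.of_norm_bounded (hμ4.mul_right C)
    intro n
    rw [Real.norm_eq_abs, abs_mul]
    exact mul_le_mul_of_nonneg_left (hC n) (abs_nonneg _)
  -- positive side
  have hpos := posSide μ lam r D hD0 hrowD hcolD hr C hC
    (fun k => by
      have := (hlam_pos ((k:ℤ)+1) (by omega)).1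
      have e : pemb (k+1) = ⟨(k:ℤ)+1+1, by omega⟩ := by
        simp only [pemb, Subtype.ext_iff]; push_cast; ring
      rw [e]; exact this)
    (fun k => (hlam_pos ((k:ℤ)+1) (by omega)).2)
    (fun m hm => by
      have := (hlam_neg m.1 hm).2
      simpa using this)
    (fun k => by
      have := hμ1 ((k:ℤ)+1) (by omega)
      have e : pemb (k+1) = ⟨(k:ℤ)+1+1, by omega⟩ := by
        simp only [pemb, Subtype.ext_iff]; push_cast; ring
      rw [e]; exact this)
    (hμ4.comp_injective pemb_inj)
  -- negative side via reflection
  have hneg := posSide (fun n => -(μ (negI n))) (fun n => -(lam (negI n)))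
    (fun n => -(r (negI n))) (fun n m => D (negI n) (negI m))
    (fun n m => hD0 _ _)
    (fun n => (negI.hasSum_iff).mpr (hrowD (negI n)))
    (fun m => (negI.hasSum_iff).mpr (hcolD (negI m)))
    (fun n => by
      have := ((negI.hasSum_iff (f := fun m => lam m * D (negI n) m)).mpr (hr (negI n))).neg
      simpa [neg_mul] using this)
    C (fun m => by rw [abs_neg]; exact hC _)
    (fun k => by
      show -(lam (negI (pemb (k+1)))) ≤ -(lam (negI (pemb k)))
      have h1 : negI (pemb k) = (⟨-((k:ℤ)+1), by omega⟩ : II) := rfl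
      have h2 : negI (pemb (k+1)) = (⟨(-((k:ℤ)+1)) - 1, by omega⟩ : II) := by
        simp only [negI, pemb, Equiv.coe_fn_mk, Subtype.ext_iff]; push_cast; ring
      rw [h1, h2]
      exact neg_le_neg (hlam_neg (-((k:ℤ)+1)) (by omega)).1)
    (fun k => by
      show 0 ≤ -(lam (negI (pemb k)))
      have h1 : negI (pemb k) = (⟨-((k:ℤ)+1), by omega⟩ : II) := rfl
      rw [h1]
      simpa using (hlam_neg (-((k:ℤ)+1)) (by omega)).2)
    (fun m hm => by
      show -(lam (negI m)) ≤ 0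
      have h1 : negI m = (⟨-m.1, by have := m.2; omega⟩ : II) := rfl
      rw [h1]
      simpa using (hlam_pos (-m.1) (by omega)).2)
    (fun k => by
      show -(μ (negI (pemb (k+1)))) ≤ -(μ (negI (pemb k)))
      have h1 : negI (pemb k) = (⟨-((k:ℤ)+1), by omega⟩ : II) := rfl
      have h2 : negI (pemb (k+1)) = (⟨(-((k:ℤ)+1)) - 1, by omega⟩ : II) := by
        simp only [negI, pemb, Equiv.coe_fn_mk, Subtype.ext_iff]; push_cast; ring
      rw [h1, h2]
      exact neg_le_neg (hμ2 (-((k:ℤ)+1)) (by omega)))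
    (by
      have : Summable fun k => |μ (negI (pemb k))| :=
        hμ4.comp_injective (negI.injective.comp pemb_inj)
      simpa [abs_neg] using this)
  have hnegI : ∀ k : ℕ, negI (pemb k) = nemb k := fun k => rfl
  simp only [hnegI, neg_mul_neg] at hneg
  rw [tsum_split _ hμr, tsum_split _ hμlam]
  exact add_le_add hpos hneg

section OpFacts
variable {H : Type*} [NormedAddCommGroup H] [InnerProductSpace ℂ H] [CompleteSpace H]

local notation "⟪" x ", " y "⟫" => inner (𝕜 := ℂ) x y

lemma rowSum (e f : HilbertBasis II ℂ H) (n : II) :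
    HasSum (fun m => ‖⟪e m, f n⟫‖^2) 1 := by
  have h := e.hasSum_inner_mul_inner (f n) (f n)
  have hfn : ⟪f n, f n⟫ = (1 : ℂ) := by
    rw [inner_self_eq_norm_sq_to_K, f.orthonormal.1 n]
    norm_num
  rw [hfn] at h
  have hterm : (fun m : II => ⟪f n, e m⟫ * ⟪e m, f n⟫)
      = fun m => ((‖⟪e m, f n⟫‖^2 : ℝ) : ℂ) := by
    funext m
    rw [← inner_conj_symm (e m) (f n), RCLike.mul_conj, RCLike.norm_conj]
    norm_cast
  rw [hterm] at h
  exact Complex.hasSum_ofReal.mp (by rw [Complex.ofReal_one]; exact h)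

lemma colSum (e f : HilbertBasis II ℂ H) (m : II) :
    HasSum (fun n => ‖⟪e m, f n⟫‖^2) 1 := by
  have h := rowSum f e m
  apply h.congr_fun
  intro n
  rw [← inner_conj_symm (e m) (f n), RCLike.norm_conj]

lemma lam_bound (A : H →L[ℂ] H) (lam : II → ℝ) (e : HilbertBasis II ℂ H)
    (he : ∀ m, A (e m) = (lam m : ℂ) • e m) (m : II) : |lam m| ≤ ‖A‖ := by
  have h1 : ‖A (e m)‖ ≤ ‖A‖ * ‖e m‖ := A.le_opNorm _
  rw [he m, norm_smul, Complex.norm_real, Real.norm_eq_abs, e.orthonormal.1 m] at h1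
  simpa using h1

lemma diag_hasSum (A : H →L[ℂ] H) (lam : II → ℝ) (e : HilbertBasis II ℂ H)
    (he : ∀ m, A (e m) = (lam m : ℂ) • e m) (f : HilbertBasis II ℂ H) (n : II) :
    HasSum (fun m => lam m * ‖⟪e m, f n⟫‖^2) (Complex.re ⟪f n, A (f n)⟫)
      ∧ ⟪f n, A (f n)⟫ = ((Complex.re ⟪f n, A (f n)⟫ : ℝ) : ℂ) := by
  -- complex expansion
  have h1 : HasSum (fun m => (e.repr (f n) m) • A (e m)) (A (f n)) :=
    (e.hasSum_repr (f n)).mapL A |>.congr_fun (fun m => by rw [ContinuousLinearMap.map_smul])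
  have h2 : HasSum (fun m => ⟪f n, (e.repr (f n) m) • A (e m)⟫) ⟪f n, A (f n)⟫ := by
    have := h1.mapL (innerSL ℂ (f n))
    exact this
  have hterm : (fun m => ⟪f n, (e.repr (f n) m) • A (e m)⟫)
      = fun m => ((lam m * ‖⟪e m, f n⟫‖^2 : ℝ) : ℂ) := by
    funext m
    rw [e.repr_apply_apply, he m, inner_smul_right, inner_smul_right,
      ← inner_conj_symm (e m) (f n), RCLike.norm_conj,
      mul_comm ((starRingEnd ℂ) (⟪f n, e m⟫)), mul_assoc, Complex.mul_conj]
    rw [Complex.normSq_eq_norm_sq]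
    push_cast
    ring
  rw [hterm] at h2
  -- real summability
  have hsum : Summable (fun m => lam m * ‖⟪e m, f n⟫‖^2) := by
    apply Summable.of_norm_bounded ((rowSum e f n).summable.mul_left ‖A‖)
    intro m
    rw [Real.norm_eq_abs, abs_mul, abs_sq]
    exact mul_le_mul_of_nonneg_right (lam_bound A lam e he m) (sq_nonneg _)
  obtain ⟨s, hs⟩ := hsum
  have hcs : HasSum (fun m => ((lam m * ‖⟪e m, f n⟫‖^2 : ℝ) : ℂ)) ((s : ℝ) : ℂ) :=
    Complex.hasSum_ofReal.mpr hs
  have heq : ⟪f n, A (f n)⟫ = ((s:ℝ):ℂ) := h2.unique hcs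
  have hre : Complex.re ⟪f n, A (f n)⟫ = s := by rw [heq, Complex.ofReal_re]
  exact ⟨hre ▸ hs, by rw [hre, heq]⟩

end OpFacts

end Aux

/-- (Theorem 1, subadditivity.) If `S`, `T`, and `S + T` are compact selfadjoint
operators admitting eigenvalue arrangements, then `ψ(S + T) ≤ ψ(S) + ψ(T)`, where
`ψ(A) = ∑_{n ∈ ℤ \ {0}} μ_n λ_n(A)`. -/
theorem psi_subadditive {H : Type*} [NormedAddCommGroup H] [InnerProductSpace ℂ H]
    [CompleteSpace H] [TopologicalSpace.SeparableSpace H]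
    (hinf : ¬FiniteDimensional ℂ H)
    (μ : {n : ℤ // n ≠ 0} → ℝ) (hμ : GoodWeights μ)
    (S T : H →L[ℂ] H) (lamS lamT lamST : {n : ℤ // n ≠ 0} → ℝ)
    (hS : EigArrangement S lamS) (hT : EigArrangement T lamT)
    (hST : EigArrangement (S + T) lamST) :
    ∑' n, μ n * lamST n ≤ (∑' n, μ n * lamS n) + ∑' n, μ n * lamT n := by
  obtain ⟨hμ1, hμ2, hμ3, hμ4⟩ := hμ
  obtain ⟨-, -, ⟨eS, heS⟩, hSpos, hSneg⟩ := hS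
  obtain ⟨-, -, ⟨eT, heT⟩, hTpos, hTneg⟩ := hT
  obtain ⟨-, -, ⟨f, hf⟩, hSTpos, hSTneg⟩ := hST
  set rS : II → ℝ := fun n => Complex.re (inner (𝕜 := ℂ) (f n) (S (f n))) with hrS
  set rT : II → ℝ := fun n => Complex.re (inner (𝕜 := ℂ) (f n) (T (f n))) with hrT
  have hdS := fun n => diag_hasSum S lamS eS heS f n
  have hdT := fun n => diag_hasSum T lamT eT heT f n
  -- lamST = rS + rT
  have hlam_eq : ∀ n, lamST n = rS n + rT n := by
    intro n
    have h1 : (inner (𝕜 := ℂ) (f n) ((S + T) (f n))) = ((lamST n : ℝ) : ℂ) := by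
      rw [hf n, inner_smul_right, inner_self_eq_norm_sq_to_K, f.orthonormal.1 n]
      push_cast; ring
    have h2 : (inner (𝕜 := ℂ) (f n) ((S + T) (f n)))
        = ((rS n : ℝ) : ℂ) + ((rT n : ℝ) : ℂ) := by
      have hS2 : (inner (𝕜 := ℂ) (f n) (S (f n))) = ((rS n : ℝ) : ℂ) := (hdS n).2
      have hT2 : (inner (𝕜 := ℂ) (f n) (T (f n))) = ((rT n : ℝ) : ℂ) := (hdT n).2
      rw [ContinuousLinearMap.add_apply, inner_add_right, hS2, hT2]
    rw [h1] at h2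
    exact_mod_cast h2
  -- bounds
  have hrSb : ∀ n, |rS n| ≤ ‖S‖ := by
    intro n
    have h : HasSum (fun m => lamS m * ‖(inner (𝕜 := ℂ) (eS m) (f n))‖^2) (rS n) := (hdS n).1
    have hb := lam_bound S lamS eS heS
    have hrow := rowSum eS f n
    have hsabs : Summable (fun m => |lamS m * ‖(inner (𝕜 := ℂ) (eS m) (f n))‖^2|) := by
      apply Summable.of_nonneg_of_le (fun m => abs_nonneg _) _ (hrow.summable.mul_left ‖S‖)
      intro m
      rw [abs_mul, abs_sq]
      exact mul_le_mul_of_nonneg_right (hb m) (sq_nonneg _)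
    have e1 : |rS n| ≤ ∑' m, |lamS m * ‖(inner (𝕜 := ℂ) (eS m) (f n))‖^2| := by
      rw [← h.tsum_eq]
      have := norm_tsum_le_tsum_norm
        (f := fun m => lamS m * ‖(inner (𝕜 := ℂ) (eS m) (f n))‖^2)
        (by simpa [Real.norm_eq_abs, abs_mul, abs_sq] using hsabs)
      simpa [Real.norm_eq_abs, abs_mul, abs_sq] using this
    have e2 : ∑' m, |lamS m * ‖(inner (𝕜 := ℂ) (eS m) (f n))‖^2|
        ≤ ∑' m, ‖S‖ * ‖(inner (𝕜 := ℂ) (eS m) (f n))‖^2 := by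
      apply Summable.tsum_le_tsum _ hsabs (hrow.summable.mul_left ‖S‖)
      intro m
      rw [abs_mul, abs_sq]
      exact mul_le_mul_of_nonneg_right (hb m) (sq_nonneg _)
    have e3 : ∑' m, ‖S‖ * ‖(inner (𝕜 := ℂ) (eS m) (f n))‖^2 = ‖S‖ := by
      rw [(hrow.mul_left ‖S‖).tsum_eq, mul_one]
    linarith
  have hrTb : ∀ n, |rT n| ≤ ‖T‖ := by
    intro n
    have h : HasSum (fun m => lamT m * ‖(inner (𝕜 := ℂ) (eT m) (f n))‖^2) (rT n) := (hdT n).1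
    have hb := lam_bound T lamT eT heT
    have hrow := rowSum eT f n
    have hsabs : Summable (fun m => |lamT m * ‖(inner (𝕜 := ℂ) (eT m) (f n))‖^2|) := by
      apply Summable.of_nonneg_of_le (fun m => abs_nonneg _) _ (hrow.summable.mul_left ‖T‖)
      intro m
      rw [abs_mul, abs_sq]
      exact mul_le_mul_of_nonneg_right (hb m) (sq_nonneg _)
    have e1 : |rT n| ≤ ∑' m, |lamT m * ‖(inner (𝕜 := ℂ) (eT m) (f n))‖^2| := by
      rw [← h.tsum_eq]
      have := norm_tsum_le_tsum_norm
        (f := fun m => lamT m * ‖(inner (𝕜 := ℂ) (eT m) (f n))‖^2)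
        (by simpa [Real.norm_eq_abs, abs_mul, abs_sq] using hsabs)
      simpa [Real.norm_eq_abs, abs_mul, abs_sq] using this
    have e2 : ∑' m, |lamT m * ‖(inner (𝕜 := ℂ) (eT m) (f n))‖^2|
        ≤ ∑' m, ‖T‖ * ‖(inner (𝕜 := ℂ) (eT m) (f n))‖^2 := by
      apply Summable.tsum_le_tsum _ hsabs (hrow.summable.mul_left ‖T‖)
      intro m
      rw [abs_mul, abs_sq]
      exact mul_le_mul_of_nonneg_right (hb m) (sq_nonneg _)
    have e3 : ∑' m, ‖T‖ * ‖(inner (𝕜 := ℂ) (eT m) (f n))‖^2 = ‖T‖ := by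
      rw [(hrow.mul_left ‖T‖).tsum_eq, mul_one]
    linarith
  have hμrS : Summable (fun n : II => μ n * rS n) := by
    apply Summable.of_norm_bounded (hμ4.mul_right ‖S‖)
    intro n
    rw [Real.norm_eq_abs, abs_mul]
    exact mul_le_mul_of_nonneg_left (hrSb n) (abs_nonneg _)
  have hμrT : Summable (fun n : II => μ n * rT n) := by
    apply Summable.of_norm_bounded (hμ4.mul_right ‖T‖)
    intro n
    rw [Real.norm_eq_abs, abs_mul]
    exact mul_le_mul_of_nonneg_left (hrTb n) (abs_nonneg _)
  have hsplit : ∑' n, μ n * lamST n = (∑' n, μ n * rS n) + ∑' n, μ n * rT n := by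
    rw [← Summable.tsum_add hμrS hμrT]
    exact tsum_congr fun n => by rw [hlam_eq n]; ring
  have hkeyS := key μ lamS rS (fun n m => ‖(inner (𝕜 := ℂ) (eS m) (f n))‖^2)
    (fun n m => sq_nonneg _) (rowSum eS f) (colSum eS f) (fun n => (hdS n).1)
    ‖S‖ (lam_bound S lamS eS heS) hSpos hSneg hμ1 hμ2 hμ4
  have hkeyT := key μ lamT rT (fun n m => ‖(inner (𝕜 := ℂ) (eT m) (f n))‖^2)
    (fun n m => sq_nonneg _) (rowSum eT f) (colSum eT f) (fun n => (hdT n).1)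
    ‖T‖ (lam_bound T lamT eT heT) hTpos hTneg hμ1 hμ2 hμ4
  rw [hsplit]
  exact add_le_add hkeyS hkeyT
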